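/- The function J : (0,∞) → ℝ defined by J(α) = ∫₀^α (√α/√(α−s)) · s (1+s²)^{-5/4} ds (equivalently J(α) = ∫₀¹ (t/√(1−t)) · α² (1+α²t²)^{-5/4} dt) is differentiable and satisfies J'(α) > 0 for all α > 0. -/

import Mathlib

open Real MeasureTheory Set
set_option maxHeartbeats 1000000



/-- `J(α) = ∫₀^α (√α/√(α−s)) · s (1+s²)^{-5/4} ds`. -/
noncomputable def Jfun (α : ℝ) : ℝ :=
  ∫ s in (0:ℝ)..α, (Real.sqrt α / Real.sqrt (α - s)) * (s * (1 + s ^ 2) ^ (-(5:ℝ)/4))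

noncomputable def ff (x : ℝ) : ℝ := x * (1 + x ^ 2) ^ (-(5:ℝ)/4)
noncomputable def ffd (x : ℝ) : ℝ :=
  (1 + x ^ 2) ^ (-(5:ℝ)/4) - (5/2) * x ^ 2 * (1 + x ^ 2) ^ (-(9:ℝ)/4)
noncomputable def gg (x : ℝ) : ℝ := x * (1 + x ^ 2) ^ (-(9:ℝ)/4)

lemma hasDerivAt_ff (x : ℝ) : HasDerivAt ff (ffd x) x := by
  have hb : (0:ℝ) < 1 + x ^ 2 := by positivity
  have h1 : HasDerivAt (fun x : ℝ => 1 + x ^ 2) (2 * x) x := by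
    simpa using ((hasDerivAt_pow 2 x).const_add 1)
  have h2 : HasDerivAt (fun x : ℝ => (1 + x ^ 2) ^ (-(5:ℝ)/4))
      (2 * x * (-(5:ℝ)/4) * (1 + x ^ 2) ^ (-(5:ℝ)/4 - 1)) x :=
    h1.rpow_const (Or.inl (ne_of_gt hb))
  have h3 := (hasDerivAt_id x).mul h2
  rw [show (-(5:ℝ)/4 - 1) = (-(9:ℝ)/4) by norm_num] at h3
  refine h3.congr_deriv ?_
  simp only [ffd, id_eq]
  ring

lemma cont_ff : Continuous ff := by
  unfold ff
  exact continuous_id.mul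
    (Continuous.rpow_const (by continuity) (fun x => Or.inl (by positivity)))

lemma cont_ffd : Continuous ffd := by
  unfold ffd
  apply Continuous.sub
  · exact Continuous.rpow_const (by continuity) (fun x => Or.inl (by positivity))
  · exact (continuous_const.mul (continuous_pow 2)).mul
      (Continuous.rpow_const (by continuity) (fun x => Or.inl (by positivity)))

lemma cont_gg : Continuous gg := by
  unfold gg
  exact continuous_id.mul
    (Continuous.rpow_const (by continuity) (fun x => Or.inl (by positivity)))

lemma ff_bound (x : ℝ) : |ff x| ≤ 1 := by
  have hb : (0:ℝ) < 1 + x ^ 2 := by positivity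
  unfold ff
  rw [abs_mul, abs_of_pos (Real.rpow_pos_of_pos hb _)]
  have h1 : (1 + x ^ 2) ^ (-(5:ℝ)/4) ≤ (1 + x ^ 2) ^ (-(1:ℝ)/2) :=
    Real.rpow_le_rpow_of_exponent_le (by nlinarith) (by norm_num)
  have h2 : (1 + x ^ 2) ^ (-(1:ℝ)/2) = (Real.sqrt (1 + x ^ 2))⁻¹ := by
    rw [show (-(1:ℝ)/2) = -(1/2) by norm_num, Real.rpow_neg hb.le, Real.sqrt_eq_rpow]
  have h3 : |x| ≤ Real.sqrt (1 + x ^ 2) := by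
    rw [← Real.sqrt_sq_eq_abs]
    exact Real.sqrt_le_sqrt (by nlinarith)
  calc |x| * (1 + x ^ 2) ^ (-(5:ℝ)/4) ≤ |x| * (1 + x ^ 2) ^ (-(1:ℝ)/2) :=
        mul_le_mul_of_nonneg_left h1 (abs_nonneg x)
    _ = |x| / Real.sqrt (1 + x ^ 2) := by rw [h2]; ring
    _ ≤ 1 := by
        rw [div_le_one (Real.sqrt_pos.mpr hb)]
        exact h3

lemma ffd_bound (x : ℝ) : |ffd x| ≤ 7/2 := by
  have hb : (0:ℝ) < 1 + x ^ 2 := by positivity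
  unfold ffd
  have h1 : (1 + x ^ 2) ^ (-(5:ℝ)/4) ≤ 1 :=
    Real.rpow_le_one_of_one_le_of_nonpos (by nlinarith) (by norm_num)
  have h2 : x ^ 2 * (1 + x ^ 2) ^ (-(9:ℝ)/4) ≤ 1 := by
    have h1' : (1 + x ^ 2) ^ (-(9:ℝ)/4) ≤ (1 + x ^ 2) ^ (-(1:ℝ)) :=
      Real.rpow_le_rpow_of_exponent_le (by nlinarith) (by norm_num)
    have h2' : (1 + x ^ 2) ^ (-(1:ℝ)) = (1 + x ^ 2)⁻¹ := Real.rpow_neg_one _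
    calc x ^ 2 * (1 + x ^ 2) ^ (-(9:ℝ)/4) ≤ x ^ 2 * (1 + x ^ 2)⁻¹ := by
          rw [← h2']; exact mul_le_mul_of_nonneg_left h1' (by positivity)
      _ ≤ 1 := by rw [← div_eq_mul_inv, div_le_one hb]; nlinarith
  have p1 : (0:ℝ) < (1 + x ^ 2) ^ (-(5:ℝ)/4) := Real.rpow_pos_of_pos hb _
  have p2 : (0:ℝ) ≤ x ^ 2 * (1 + x ^ 2) ^ (-(9:ℝ)/4) := by positivity
  rw [abs_sub_le_iff]
  constructor <;> nlinarith

lemma rpow_split (z : ℝ) : (1 + z ^ 2) ^ (-(5:ℝ)/4) = (1 + z ^ 2) * (1 + z ^ 2) ^ (-(9:ℝ)/4) := by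
  have hb : (0:ℝ) < 1 + z ^ 2 := by positivity
  rw [show (-(5:ℝ)/4) = 1 + (-(9:ℝ)/4) by norm_num, Real.rpow_add hb, Real.rpow_one]

/-- Key exact-derivative identity in `w`. -/
lemma hasDerivAt_E (σ w : ℝ) :
    HasDerivAt (fun w : ℝ => -(σ * (w * (1 - w ^ 2) ^ 2)) * (1 + (σ * (1 - w ^ 2)) ^ 2) ^ (-(5:ℝ)/4))
      (2 * ff (σ * (1 - w ^ 2)) + 2 * σ * (1 - w ^ 2) * ffd (σ * (1 - w ^ 2))
        - 5 * (1 - w ^ 2) * gg (σ * (1 - w ^ 2))) w := by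
  have hq : HasDerivAt (fun w : ℝ => 1 - w ^ 2) (-(2 * w)) w := by
    simpa using ((hasDerivAt_pow 2 w).const_sub 1)
  have hu : HasDerivAt (fun w : ℝ => σ * (1 - w ^ 2)) (σ * -(2 * w)) w := hq.const_mul σ
  have hy : HasDerivAt (fun w : ℝ => 1 + (σ * (1 - w ^ 2)) ^ 2)
      (2 * (σ * (1 - w ^ 2)) ^ 1 * (σ * -(2 * w))) w := (hu.pow 2).const_add 1
  have hb : (0:ℝ) < 1 + (σ * (1 - w ^ 2)) ^ 2 := by positivity
  have hr : HasDerivAt (fun w : ℝ => (1 + (σ * (1 - w ^ 2)) ^ 2) ^ (-(5:ℝ)/4))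
      (2 * (σ * (1 - w ^ 2)) ^ 1 * (σ * -(2 * w)) * (-(5:ℝ)/4)
        * (1 + (σ * (1 - w ^ 2)) ^ 2) ^ (-(5:ℝ)/4 - 1)) w :=
    hy.rpow_const (Or.inl (ne_of_gt hb))
  have hp := (((hasDerivAt_id w).mul (hq.pow 2)).const_mul σ).neg
  have h := hp.mul hr
  rw [show (-(5:ℝ)/4 - 1) = (-(9:ℝ)/4) by norm_num] at h
  simp only [id_eq] at h
  refine h.congr_deriv ?_
  simp only [ff, ffd, gg, Pi.pow_apply, Pi.neg_apply, Pi.mul_apply, id_eq]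
  rw [rpow_split (σ * (1 - w ^ 2))]
  push_cast
  ring

lemma dom_integrable {α : ℝ} (hα : 0 < α) :
    IntegrableOn (fun s : ℝ => Real.sqrt α * (α - s) ^ (-(1:ℝ)/2)) (Icc 0 α) := by
  have h1 : IntervalIntegrable (fun x : ℝ => x ^ (-(1:ℝ)/2)) volume 0 α :=
    intervalIntegral.intervalIntegrable_rpow' (by norm_num)
  have h2 := (h1.comp_sub_left α).symm
  simp only [sub_zero, sub_self] at h2
  have h3 := h2.const_mul (Real.sqrt α)
  rwa [intervalIntegrable_iff', uIcc_of_le hα.le] at h3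

lemma Jint_integrable {α : ℝ} (hα : 0 < α) :
    IntegrableOn (fun s : ℝ => (Real.sqrt α / Real.sqrt (α - s)) * (s * (1 + s ^ 2) ^ (-(5:ℝ)/4)))
      (Icc 0 α) := by
  rw [integrableOn_Icc_iff_integrableOn_Ico]
  refine Integrable.mono' ((dom_integrable hα).mono_set Ico_subset_Icc_self) ?_ ?_
  · apply Measurable.aestronglyMeasurable
    apply Measurable.mul
    · exact measurable_const.div
        ((continuous_sqrt.measurable).comp (measurable_const.sub measurable_id))
    · exact cont_ff.measurable
  · refine (ae_restrict_mem measurableSet_Ico).mono ?_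
    intro s hs
    have hαs : 0 < α - s := by linarith [hs.2]
    have h1 : ‖(Real.sqrt α / Real.sqrt (α - s)) * (s * (1 + s ^ 2) ^ (-(5:ℝ)/4))‖
        ≤ (Real.sqrt α / Real.sqrt (α - s)) * 1 := by
      rw [norm_mul, Real.norm_eq_abs, Real.norm_eq_abs,
        abs_of_nonneg (div_nonneg (Real.sqrt_nonneg _) (Real.sqrt_nonneg _))]
      exact mul_le_mul_of_nonneg_left (ff_bound s)
        (div_nonneg (Real.sqrt_nonneg _) (Real.sqrt_nonneg _))
    refine h1.trans ?_
    rw [mul_one, div_eq_mul_inv]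
    apply mul_le_mul_of_nonneg_left _ (Real.sqrt_nonneg _)
    rw [show (-(1:ℝ)/2) = -(1/2) by norm_num, Real.rpow_neg hαs.le, Real.sqrt_eq_rpow]


lemma integrand_eq {α w : ℝ} (hα : 0 < α) (hw : 0 < w) :
    (α * -(2 * w)) * ((Real.sqrt α / Real.sqrt (α - α * (1 - w ^ 2)))
      * ((α * (1 - w ^ 2)) * (1 + (α * (1 - w ^ 2)) ^ 2) ^ (-(5:ℝ)/4)))
    = -(2 * α) * ff (α * (1 - w ^ 2)) := by
  have hαs : Real.sqrt α ≠ 0 := ne_of_gt (Real.sqrt_pos.mpr hα)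
  have e1 : α - α * (1 - w ^ 2) = α * w ^ 2 := by ring
  have e2 : Real.sqrt (α * w ^ 2) = Real.sqrt α * w := by
    rw [Real.sqrt_mul hα.le, Real.sqrt_sq hw.le]
  rw [e1, e2]
  simp only [ff]
  field_simp

/-- Substitution `s = α (1 - w²)`. -/
lemma Jfun_eq {α : ℝ} (hα : 0 < α) :
    Jfun α = 2 * α * ∫ w in (0:ℝ)..1, ff (α * (1 - w ^ 2)) := by
  have h0 : ∀ᵐ w : ℝ ∂volume, w ≠ 0 := by
    refine MeasureTheory.ae_iff.mpr ?_
    simp [not_not]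
  have key : (∫ w in (0:ℝ)..1,
        (α * -(2 * w)) • ((fun s : ℝ => (Real.sqrt α / Real.sqrt (α - s))
          * (s * (1 + s ^ 2) ^ (-(5:ℝ)/4))) (α * (1 - w ^ 2))))
      = ∫ u in (α * (1 - (0:ℝ) ^ 2))..(α * (1 - (1:ℝ) ^ 2)),
          (Real.sqrt α / Real.sqrt (α - u)) * (u * (1 + u ^ 2) ^ (-(5:ℝ)/4)) := by
    apply intervalIntegral.integral_comp_smul_deriv'''
      (f := fun w : ℝ => α * (1 - w ^ 2)) (f' := fun w => α * -(2 * w))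
      (g := fun s : ℝ => (Real.sqrt α / Real.sqrt (α - s)) * (s * (1 + s ^ 2) ^ (-(5:ℝ)/4)))
      (a := 0) (b := 1)
    · exact (continuous_const.mul (continuous_const.sub (continuous_pow 2))).continuousOn
    · intro x _
      have hq : HasDerivAt (fun w : ℝ => 1 - w ^ 2) (-(2 * x)) x := by
        simpa using ((hasDerivAt_pow 2 x).const_sub 1)
      exact (hq.const_mul α).hasDerivWithinAt
    · have himg : (fun w : ℝ => α * (1 - w ^ 2)) '' (Ioo (min 0 1) (max 0 1)) ⊆ Ico 0 α := by
        rintro s ⟨w, hw, rfl⟩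
        rw [show (min (0:ℝ) 1) = 0 by norm_num, show (max (0:ℝ) 1) = 1 by norm_num] at hw
        obtain ⟨h1, h2⟩ := hw
        have hq0 : (0:ℝ) < 1 - w ^ 2 := by nlinarith
        have hw2 : (0:ℝ) < α * w ^ 2 := by positivity
        show α * (1 - w ^ 2) ∈ Ico 0 α
        constructor
        · positivity
        · nlinarith
      refine ContinuousOn.mono ?_ himg
      apply ContinuousOn.mul
      · apply ContinuousOn.div continuousOn_const
        · exact (continuous_sqrt.comp (continuous_const.sub continuous_id)).continuousOn
        · intro s hs
          exact ne_of_gt (Real.sqrt_pos.mpr (by linarith [hs.2]))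
      · exact cont_ff.continuousOn
    · have himg : (fun w : ℝ => α * (1 - w ^ 2)) '' (Set.uIcc 0 1) ⊆ Icc 0 α := by
        rintro s ⟨w, hw, rfl⟩
        rw [uIcc_of_le (by norm_num : (0:ℝ) ≤ 1)] at hw
        obtain ⟨h1, h2⟩ := hw
        have hq0 : (0:ℝ) ≤ 1 - w ^ 2 := by nlinarith
        have hw2 : (0:ℝ) ≤ α * w ^ 2 := by positivity
        show α * (1 - w ^ 2) ∈ Icc 0 α
        constructor
        · positivity
        · nlinarith
      exact (Jint_integrable hα).mono_set himg
    · have hcont : Continuous (fun w : ℝ => -(2 * α) * ff (α * (1 - w ^ 2))) :=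
        continuous_const.mul
          (cont_ff.comp (continuous_const.mul (continuous_const.sub (continuous_pow 2))))
      rw [show Set.uIcc (0:ℝ) 1 = Icc (0:ℝ) 1 from uIcc_of_le (by norm_num)]
      apply (hcont.integrableOn_Icc (a := 0) (b := 1)).congr
      filter_upwards [ae_restrict_mem measurableSet_Icc, ae_restrict_of_ae h0] with w hw hw0
      have hwpos : 0 < w := lt_of_le_of_ne hw.1 (Ne.symm hw0)
      simp only [Function.comp, smul_eq_mul]
      exact (integrand_eq hα hwpos).symm
  have hφ0 : α * (1 - (0:ℝ) ^ 2) = α := by ring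
  have hφ1 : α * (1 - (1:ℝ) ^ 2) = 0 := by ring
  rw [hφ0, hφ1] at key
  have hL : (∫ w in (0:ℝ)..1,
        (α * -(2 * w)) • ((fun s : ℝ => (Real.sqrt α / Real.sqrt (α - s))
          * (s * (1 + s ^ 2) ^ (-(5:ℝ)/4))) (α * (1 - w ^ 2))))
      = ∫ w in (0:ℝ)..1, -(2 * α) * ff (α * (1 - w ^ 2)) := by
    apply intervalIntegral.integral_congr_ae
    filter_upwards [h0] with w hw0 hw
    rw [uIoc_of_le (by norm_num : (0:ℝ) ≤ 1)] at hw
    simp only [smul_eq_mul]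
    exact integrand_eq hα hw.1
  rw [hL] at key
  rw [intervalIntegral.integral_const_mul] at key
  have hJ : Jfun α = ∫ u in (0:ℝ)..α,
      (Real.sqrt α / Real.sqrt (α - u)) * (u * (1 + u ^ 2) ^ (-(5:ℝ)/4)) := rfl
  rw [intervalIntegral.integral_symm 0 α] at key
  rw [hJ]
  linarith [key]

lemma cont_aux (σ : ℝ) : Continuous (fun w : ℝ => σ * (1 - w ^ 2)) :=
  continuous_const.mul (continuous_const.sub (continuous_pow 2))

lemma hasDerivAt_int {α : ℝ} :
    HasDerivAt (fun σ : ℝ => ∫ w in (0:ℝ)..1, 2 * σ * ff (σ * (1 - w ^ 2)))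
      (∫ w in (0:ℝ)..1,
        (2 * ff (α * (1 - w ^ 2)) + 2 * α * (1 - w ^ 2) * ffd (α * (1 - w ^ 2)))) α := by
  have key := intervalIntegral.hasDerivAt_integral_of_dominated_loc_of_deriv_le
    (μ := volume) (a := (0:ℝ)) (b := 1) (x₀ := α) (s := Metric.ball α 1)
    (F := fun σ w => 2 * σ * ff (σ * (1 - w ^ 2)))
    (F' := fun σ w => 2 * ff (σ * (1 - w ^ 2)) + 2 * σ * (1 - w ^ 2) * ffd (σ * (1 - w ^ 2)))
    (bound := fun _ => 2 + 7 * (|α| + 1))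
    (Metric.ball_mem_nhds α one_pos)
    (Filter.Eventually.of_forall fun σ =>
      ((continuous_const.mul (cont_ff.comp (cont_aux σ))).aestronglyMeasurable))
    ((continuous_const.mul (cont_ff.comp (cont_aux α))).intervalIntegrable 0 1)
    (((continuous_const.mul (cont_ff.comp (cont_aux α))).add
      (((continuous_const.mul (continuous_const.sub (continuous_pow 2)))).mul
        (cont_ffd.comp (cont_aux α)))).aestronglyMeasurable)
    ?_ (intervalIntegrable_const) ?_
  · exact key.2
  · -- bound
    refine Filter.Eventually.of_forall fun w => fun hw σ hσ => ?_
    rw [uIoc_of_le (by norm_num : (0:ℝ) ≤ 1)] at hw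
    have hq : |1 - w ^ 2| ≤ 1 := by
      rw [abs_le]; constructor <;> nlinarith [hw.1, hw.2]
    have hσb : |σ| ≤ |α| + 1 := by
      have := mem_ball_iff_norm.mp hσ
      rw [Real.norm_eq_abs] at this
      calc |σ| = |α + (σ - α)| := by ring_nf
        _ ≤ |α| + |σ - α| := abs_add_le _ _
        _ ≤ |α| + 1 := by linarith [this]
    have h1 : ‖2 * ff (σ * (1 - w ^ 2))‖ ≤ 2 := by
      rw [Real.norm_eq_abs, abs_mul, abs_two]
      nlinarith [ff_bound (σ * (1 - w ^ 2)), abs_nonneg (ff (σ * (1 - w ^ 2)))]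
    have h2 : ‖2 * σ * (1 - w ^ 2) * ffd (σ * (1 - w ^ 2))‖ ≤ 7 * (|α| + 1) := by
      rw [Real.norm_eq_abs, abs_mul, abs_mul, abs_mul, abs_two]
      have b1 := ffd_bound (σ * (1 - w ^ 2))
      have n1 : (0:ℝ) ≤ |σ| := abs_nonneg σ
      have n2 : (0:ℝ) ≤ |1 - w ^ 2| := abs_nonneg _
      have n3 : (0:ℝ) ≤ |ffd (σ * (1 - w ^ 2))| := abs_nonneg _
      have hαa : (0:ℝ) ≤ |α| := abs_nonneg α
      have m1 : |σ| * |1 - w ^ 2| ≤ (|α| + 1) * 1 := mul_le_mul hσb hq n2 (by positivity)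
      have m2 : (|σ| * |1 - w ^ 2|) * |ffd (σ * (1 - w ^ 2))| ≤ ((|α| + 1) * 1) * (7/2) :=
        mul_le_mul m1 b1 n3 (by positivity)
      nlinarith [m2]
    calc ‖2 * ff (σ * (1 - w ^ 2)) + 2 * σ * (1 - w ^ 2) * ffd (σ * (1 - w ^ 2))‖
        ≤ ‖2 * ff (σ * (1 - w ^ 2))‖ + ‖2 * σ * (1 - w ^ 2) * ffd (σ * (1 - w ^ 2))‖ :=
          norm_add_le _ _
      _ ≤ 2 + 7 * (|α| + 1) := add_le_add h1 h2
  · -- differentiability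
    refine Filter.Eventually.of_forall fun w => fun _ σ _ => ?_
    have hq : HasDerivAt (fun σ : ℝ => σ * (1 - w ^ 2)) (1 - w ^ 2) σ :=
      hasDerivAt_mul_const _
    have hffc : HasDerivAt (fun σ : ℝ => ff (σ * (1 - w ^ 2)))
        (ffd (σ * (1 - w ^ 2)) * (1 - w ^ 2)) σ := (hasDerivAt_ff _).comp σ hq
    have h2σ : HasDerivAt (fun σ : ℝ => 2 * σ) 2 σ := by
      simpa using (hasDerivAt_id σ).const_mul 2
    have h := h2σ.mul hffc
    refine h.congr_deriv ?_
    ring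

lemma deriv_identity {α : ℝ} :
    (∫ w in (0:ℝ)..1,
        (2 * ff (α * (1 - w ^ 2)) + 2 * α * (1 - w ^ 2) * ffd (α * (1 - w ^ 2))))
      = ∫ w in (0:ℝ)..1, 5 * (1 - w ^ 2) * gg (α * (1 - w ^ 2)) := by
  have contA : Continuous (fun w : ℝ =>
      2 * ff (α * (1 - w ^ 2)) + 2 * α * (1 - w ^ 2) * ffd (α * (1 - w ^ 2))) :=
    (continuous_const.mul (cont_ff.comp (cont_aux α))).add
      ((continuous_const.mul (continuous_const.sub (continuous_pow 2))).mul
        (cont_ffd.comp (cont_aux α)))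
  have contB : Continuous (fun w : ℝ => 5 * (1 - w ^ 2) * gg (α * (1 - w ^ 2))) :=
    (continuous_const.mul (continuous_const.sub (continuous_pow 2))).mul
      (cont_gg.comp (cont_aux α))
  have hftc := intervalIntegral.integral_eq_sub_of_hasDerivAt (a := (0:ℝ)) (b := 1)
    (f := fun w : ℝ => -(α * (w * (1 - w ^ 2) ^ 2)) * (1 + (α * (1 - w ^ 2)) ^ 2) ^ (-(5:ℝ)/4))
    (f' := fun w : ℝ => 2 * ff (α * (1 - w ^ 2)) + 2 * α * (1 - w ^ 2) * ffd (α * (1 - w ^ 2))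
      - 5 * (1 - w ^ 2) * gg (α * (1 - w ^ 2)))
    (fun w _ => hasDerivAt_E α w)
    ((contA.sub contB).intervalIntegrable 0 1)
  norm_num at hftc
  have hsub := intervalIntegral.integral_sub
    (contA.intervalIntegrable (μ := volume) 0 1)
    (contB.intervalIntegrable (μ := volume) 0 1)
  rw [hsub] at hftc
  linarith [hftc]

/-- `J` is differentiable on `(0,∞)` with `J'(α) > 0` for all `α > 0`. -/
theorem stmt_10 :
    ∀ α ∈ Set.Ioi (0:ℝ), DifferentiableAt ℝ Jfun α ∧ 0 < deriv Jfun α := by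
  intro α hα
  rw [Set.mem_Ioi] at hα
  have hEv : Jfun =ᶠ[nhds α] (fun σ : ℝ => ∫ w in (0:ℝ)..1, 2 * σ * ff (σ * (1 - w ^ 2))) := by
    filter_upwards [isOpen_Ioi.mem_nhds hα] with σ hσ
    rw [Set.mem_Ioi] at hσ
    rw [Jfun_eq hσ, ← intervalIntegral.integral_const_mul]
  have hJd : HasDerivAt Jfun
      (∫ w in (0:ℝ)..1,
        (2 * ff (α * (1 - w ^ 2)) + 2 * α * (1 - w ^ 2) * ffd (α * (1 - w ^ 2)))) α :=
    hasDerivAt_int.congr_of_eventuallyEq hEv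
  refine ⟨hJd.differentiableAt, ?_⟩
  rw [hJd.deriv, deriv_identity]
  apply intervalIntegral.intervalIntegral_pos_of_pos_on
    (f := fun w : ℝ => 5 * (1 - w ^ 2) * gg (α * (1 - w ^ 2)))
  · exact ((continuous_const.mul (continuous_const.sub (continuous_pow 2))).mul
      (cont_gg.comp (cont_aux α))).intervalIntegrable 0 1
  · intro w hw
    have h1 : (0:ℝ) < 1 - w ^ 2 := by nlinarith [hw.1, hw.2]
    have h2 : (0:ℝ) < α * (1 - w ^ 2) := by positivity
    have h3 : (0:ℝ) < gg (α * (1 - w ^ 2)) := by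
      simp only [gg]
      exact mul_pos h2 (Real.rpow_pos_of_pos (by positivity) _)
    nlinarith
  · norm_num
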